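/- arXiv:2012.02132 — 4 statements merged into one kernel-verified Lean document; each statement's English description precedes it below -/
import Mathlib

section
/- For every z ∈ U, the quadratic distance function of X satisfies ⟨X(z), X(z)⟩ = h(z)²·(T(z)²·|f'(z)|²/(4|g'(z)|²) + 1), where ⟨·,·⟩ is the Euclidean inner product on ℝ³. -/
/-- `⟨a,b⟩ := Re (a * conj b)` for complex numbers. -/
noncomputable def cinner (a b : ℂ) : ℝ := (a * (starRingEnd ℂ) b).re

/-- Euclidean inner product on `ℝ × ℝ × ℝ`. -/
def dot3 (v w : ℝ × ℝ × ℝ) : ℝ := v.1 * w.1 + v.2.1 * w.2.1 + v.2.2 * w.2.2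

set_option maxHeartbeats 2000000

/-- the quadratic distance function of `X`. -/
theorem quadratic_distance_function
    (U : Set ℂ) (hU : IsOpen U)
    (f f' g g' : ℂ → ℂ)
    (hf : ∀ z ∈ U, HasDerivAt f (f' z) z)
    (hg : ∀ z ∈ U, HasDerivAt g (g' z) z)
    (hgne : ∀ z ∈ U, g' z ≠ 0)
    (T h : ℂ → ℝ)
    (hT : ∀ z, T z = 1 + ‖g z‖ ^ 2)
    (hh : ∀ z, h z = Real.exp (f z).re)
    (N : ℂ → ℝ × ℝ × ℝ)
    (hN : ∀ z, N z = (2 * (g z).re / T z, 2 * (g z).im / T z,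
        (1 - ‖g z‖ ^ 2) / T z))
    (A : ℂ → ℂ)
    (hA : ∀ z, A z = (T z : ℂ) * g' z * (starRingEnd ℂ) (f' z)
        - 2 * g z * ((cinner (g' z) (g z * f' z) : ℝ) : ℂ))
    (X : ℂ → ℝ × ℝ × ℝ)
    (hX : ∀ z, X z = (h z / (2 * ‖g' z‖ ^ 2)) •
          (((A z).re, (A z).im, -2 * cinner (g' z) (g z * f' z)) : ℝ × ℝ × ℝ)
        + h z • N z)
    : ∀ z ∈ U,
      dot3 (X z) (X z)
        = h z ^ 2 * (T z ^ 2 * ‖f' z‖ ^ 2 / (4 * ‖g' z‖ ^ 2) + 1) := by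
  intro z hz
  have hD : (g' z).re ^ 2 + (g' z).im ^ 2 ≠ 0 := by
    have h0 := hgne z hz
    intro hc
    apply h0
    have h1 : Complex.normSq (g' z) = 0 := by
      rw [Complex.normSq_apply]; nlinarith [sq_nonneg (g' z).re, sq_nonneg (g' z).im]
    exact Complex.normSq_eq_zero.mp h1
  have hTg : (1 : ℝ) + ((g z).re ^ 2 + (g z).im ^ 2) ≠ 0 := by positivity
  have habs : ∀ w : ℂ, ‖w‖ ^ 2 = w.re ^ 2 + w.im ^ 2 := by
    intro w; rw [Complex.sq_norm, Complex.normSq_apply]; ring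
  simp only [dot3, hX, hN, hA, cinner, Complex.mul_re, Complex.mul_im,
    Complex.conj_re, Complex.conj_im, Complex.ofReal_re, Complex.ofReal_im,
    Complex.sub_re, Complex.sub_im, Prod.smul_mk, Prod.mk_add_mk, smul_eq_mul,
    Complex.re_ofNat, Complex.im_ofNat, hT, habs]
  field_simp
  ring
end

section
/- For every z ∈ U, the sphere with center X(z) + ρ(z)·N(z) and radius |ρ(z)|, where ρ(z) = −h(z)·(T(z)²|f'(z)|²/(8|g'(z)|²) + 1/2), passes through the origin; equivalently, ‖X(z) + ρ(z)·N(z)‖² = ρ(z)². (This is the defining property of SS-surfaces: ρ equals H/K + ψ/2 where H, K are the mean and Gauss curvatures and ψ = ⟨X, N⟩ is the support function, and the identity is equivalent to the generalized Weingarten relation 2ψH + (Λ + ψ²)K = 0 with Λ = ⟨X, X⟩.) -/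
set_option maxHeartbeats 4000000 in
/-- the middle-type sphere of radius `|ρ|` centered at `X + ρ·N`,
with `ρ = −h·(T²|f'|²/(8|g'|²) + 1/2)`, passes through the origin:
`‖X + ρ·N‖² = ρ²`  (the defining property of SS-surfaces). -/
theorem ss_sphere_through_origin
    (U : Set ℂ) (hU : IsOpen U)
    (f f' g g' : ℂ → ℂ)
    (hf : ∀ z ∈ U, HasDerivAt f (f' z) z)
    (hg : ∀ z ∈ U, HasDerivAt g (g' z) z)
    (hgne : ∀ z ∈ U, g' z ≠ 0)
    (T h : ℂ → ℝ)
    (hT : ∀ z, T z = 1 + ‖g z‖ ^ 2)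
    (hh : ∀ z, h z = Real.exp (f z).re)
    (N : ℂ → ℝ × ℝ × ℝ)
    (hN : ∀ z, N z = (2 * (g z).re / T z, 2 * (g z).im / T z,
        (1 - ‖g z‖ ^ 2) / T z))
    (A : ℂ → ℂ)
    (hA : ∀ z, A z = (T z : ℂ) * g' z * (starRingEnd ℂ) (f' z)
        - 2 * g z * ((cinner (g' z) (g z * f' z) : ℝ) : ℂ))
    (X : ℂ → ℝ × ℝ × ℝ)
    (hX : ∀ z, X z = (h z / (2 * ‖g' z‖ ^ 2)) •
          (((A z).re, (A z).im, -2 * cinner (g' z) (g z * f' z)) : ℝ × ℝ × ℝ)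
        + h z • N z)
    (ρ : ℂ → ℝ)
    (hρ : ∀ z, ρ z = -(h z) * (T z ^ 2 * ‖f' z‖ ^ 2
        / (8 * ‖g' z‖ ^ 2) + 1 / 2))
    : ∀ z ∈ U,
      dot3 (X z + ρ z • N z) (X z + ρ z • N z) = ρ z ^ 2 := by
  intro z hz
  have hg' : g' z ≠ 0 := hgne z hz
  have habs' : (g' z).re * (g' z).re + (g' z).im * (g' z).im ≠ 0 := by
    intro hc
    apply hg'
    have h1 : (g' z).re = 0 := by nlinarith [mul_self_nonneg (g' z).re, mul_self_nonneg (g' z).im]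
    have h2 : (g' z).im = 0 := by nlinarith [mul_self_nonneg (g' z).re, mul_self_nonneg (g' z).im]
    exact Complex.ext h1 h2
  have hT0 : (1:ℝ) + ((g z).re * (g z).re + (g z).im * (g z).im) ≠ 0 := by
    have : (0:ℝ) < 1 + ((g z).re * (g z).re + (g z).im * (g z).im) := by
      nlinarith [mul_self_nonneg (g z).re, mul_self_nonneg (g z).im]
    exact this.ne'
  simp only [hX, hρ, hN, hA, hT, dot3, cinner, Prod.smul_mk, Prod.mk_add_mk, Prod.fst_add,
    Prod.snd_add, Prod.smul_fst, Prod.smul_snd, smul_eq_mul, Complex.sq_norm,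
    Complex.normSq_apply, Complex.mul_re, Complex.mul_im, Complex.sub_re, Complex.sub_im,
    Complex.add_re, Complex.add_im, Complex.ofReal_re, Complex.ofReal_im, Complex.conj_re,
    Complex.conj_im, Complex.re_ofNat, Complex.im_ofNat]
  field_simp [habs', hT0, (by simpa [sq] using habs' : (g' z).re ^ 2 + (g' z).im ^ 2 ≠ 0),
    (by simpa [sq] using hT0 : (1:ℝ) + ((g z).re ^ 2 + (g z).im ^ 2) ≠ 0)]
  ring
end

section
/- Let a, b, c ∈ ℝ and take f(z) = a·z + (b + i·c) and g(z) = exp(z). Then the SS-surface parametrization X is a surface of revolution about the third coordinate axis: for all u₁, u₂ ∈ ℝ, X(u₁ + i·u₂) = (M(u₁)·cos u₂, M(u₁)·sin u₂, Ñ(u₁)), where M(u₁) = e^{a·u₁ + b}·(a·(1 − e^{2u₁})·e^{−u₁}/2 + 2e^{u₁}/(1 + e^{2u₁})) and Ñ(u₁) = e^{a·u₁ + b}·((1 − e^{2u₁})/(1 + e^{2u₁}) − a). -/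
/-- for `f z = a·z + (b + i·c)` and `g = exp`, the SS-surface `X` is a
surface of revolution about the third axis, with profile functions `M`, `Ñ`. -/
theorem rotational_ss_surface (a b c : ℝ)
    (f f' g g' : ℂ → ℂ)
    (hf : ∀ z, f z = (a : ℂ) * z + ((b : ℂ) + Complex.I * (c : ℂ)))
    (hf' : ∀ z, f' z = (a : ℂ))
    (hg : ∀ z, g z = Complex.exp z)
    (hg' : ∀ z, g' z = Complex.exp z)
    (T h : ℂ → ℝ)
    (hT : ∀ z, T z = 1 + ‖g z‖ ^ 2)
    (hh : ∀ z, h z = Real.exp (f z).re)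
    (N : ℂ → ℝ × ℝ × ℝ)
    (hN : ∀ z, N z = (2 * (g z).re / T z, 2 * (g z).im / T z,
        (1 - ‖g z‖ ^ 2) / T z))
    (A : ℂ → ℂ)
    (hA : ∀ z, A z = (T z : ℂ) * g' z * (starRingEnd ℂ) (f' z)
        - 2 * g z * ((cinner (g' z) (g z * f' z) : ℝ) : ℂ))
    (X : ℂ → ℝ × ℝ × ℝ)
    (hX : ∀ z, X z = (h z / (2 * ‖g' z‖ ^ 2)) •
          (((A z).re, (A z).im, -2 * cinner (g' z) (g z * f' z)) : ℝ × ℝ × ℝ)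
        + h z • N z)
    (M Nt : ℝ → ℝ)
    (hM : ∀ u, M u = Real.exp (a * u + b)
        * (a * (1 - Real.exp (2 * u)) * Real.exp (-u) / 2
            + 2 * Real.exp u / (1 + Real.exp (2 * u))))
    (hNt : ∀ u, Nt u = Real.exp (a * u + b)
        * ((1 - Real.exp (2 * u)) / (1 + Real.exp (2 * u)) - a)) :
    ∀ u₁ u₂ : ℝ,
      X ((u₁ : ℂ) + Complex.I * (u₂ : ℂ))
        = (M u₁ * Real.cos u₂, M u₁ * Real.sin u₂, Nt u₁) := by
  intro u₁ u₂
  have he1 : Real.exp u₁ ≠ 0 := Real.exp_ne_zero _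
  have hT0 : 1 + Real.exp u₁ * Real.exp u₁ ≠ 0 := by positivity
  have hzre : ((u₁:ℂ) + Complex.I * u₂).re = u₁ := by simp
  have hzim : ((u₁:ℂ) + Complex.I * u₂).im = u₂ := by simp
  have hre : (Complex.exp ((u₁:ℂ) + Complex.I * u₂)).re = Real.exp u₁ * Real.cos u₂ := by
    rw [Complex.exp_re, hzre, hzim]
  have him : (Complex.exp ((u₁:ℂ) + Complex.I * u₂)).im = Real.exp u₁ * Real.sin u₂ := by
    rw [Complex.exp_im, hzre, hzim]
  have hcin : cinner (Complex.exp ((u₁:ℂ) + Complex.I * u₂))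
      (Complex.exp ((u₁:ℂ) + Complex.I * u₂) * (a:ℂ)) = a * (Real.exp u₁ * Real.exp u₁) := by
    rw [cinner, map_mul, Complex.conj_ofReal, ← mul_assoc, Complex.mul_conj,
      Complex.normSq_eq_norm_sq, Complex.norm_exp, hzre,
      ← Complex.ofReal_mul, Complex.ofReal_re]
    ring
  rw [hX, hA, hN, hM, hNt]
  simp only [hg, hg', hf, hf', hT, hh, hcin, two_mul, Real.exp_add, Real.exp_neg]
  simp only [hcin, hre, him, Complex.norm_exp, hzre, hzim,
    Complex.add_re, Complex.add_im, Complex.mul_re, Complex.mul_im, Complex.sub_re,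
    Complex.sub_im, Complex.ofReal_re, Complex.ofReal_im, Complex.I_re, Complex.I_im,
    map_mul, Complex.conj_ofReal, Complex.mul_conj, Complex.normSq_apply,
    Prod.smul_mk, smul_eq_mul, Prod.mk_add_mk, Prod.mk.injEq, Real.exp_add]
  refine ⟨?_, ?_, ?_⟩ <;> field_simp <;> ring_nf <;> simp only [Real.exp_zero] <;> ring
end

section
/- Let U ⊆ ℂ be a nonempty connected open set and f : ℂ → ℂ holomorphic on U. If the real part of f is independent of the second coordinate, i.e. ∂₂(Re f)(z) = 0 for all z ∈ U, then there exists a real constant a ∈ ℝ such that f'(z) = a for all z ∈ U; consequently Re f(u₁ + i·u₂) = a·u₁ + b for some constant b ∈ ℝ. -/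
/-- For a ℂ-linear derivative of a map ℂ → ℂ, the value at `v` is `v * deriv`. -/
lemma fderiv_complex_apply (F : ℂ → ℂ) (x v : ℂ) :
    fderiv ℂ F x v = v * deriv F x := by
  have : v = v • (1 : ℂ) := by simp
  rw [deriv, this, map_smul]
  simp [smul_eq_mul]

lemma fderiv_eq_zero_of_deriv_eq_zero {F : ℂ → ℂ} {x : ℂ} (h : deriv F x = 0) :
    fderiv ℂ F x = 0 := by
  ext
  rw [fderiv_complex_apply, h, mul_zero]
  simp

/-- if `f` is holomorphic on a nonempty connected open set `U ⊆ ℂ` and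
`Re f` is independent of the second coordinate (`∂₂(Re f) = 0` on `U`), then `f'` is a
real constant `a` on `U`, and `Re f(u₁ + i·u₂) = a·u₁ + b` for some constant `b`. -/
theorem re_independent_of_u2_implies_affine (U : Set ℂ) (hU : IsOpen U)
    (hne : U.Nonempty) (hconn : IsConnected U)
    (f : ℂ → ℂ) (hf : DifferentiableOn ℂ f U)
    (hRe : ∀ z ∈ U, fderiv ℝ (fun w => (f w).re) z Complex.I = 0) :
    ∃ a : ℝ, (∀ z ∈ U, deriv f z = (a : ℂ)) ∧
      ∃ b : ℝ, ∀ z ∈ U, (f z).re = a * z.re + b := by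
  have hfa : AnalyticOnNhd ℂ f U := hf.analyticOnNhd hU
  -- Step 1 : `Im (deriv f z) = 0` on `U` (Cauchy–Riemann)
  have him : ∀ z ∈ U, (deriv f z).im = 0 := by
    intro z hz
    have hd : DifferentiableAt ℂ f z := hf.differentiableAt (hU.mem_nhds hz)
    have h1 : HasFDerivAt (fun w => (f w).re)
        (Complex.reCLM.comp ((fderiv ℂ f z).restrictScalars ℝ)) z :=
      Complex.reCLM.hasFDerivAt.comp z (hd.hasFDerivAt.restrictScalars ℝ)
    have h2 := hRe z hz
    rw [h1.fderiv] at h2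
    have h3 : ((fderiv ℂ f z Complex.I).re : ℝ) = 0 := h2
    rw [fderiv_complex_apply] at h3
    simpa [Complex.mul_re] using h3
  -- Step 2 : `deriv f` is constant on `U`, by the open mapping theorem
  have hda : AnalyticOnNhd ℂ (deriv f) U := hfa.deriv
  obtain ⟨w, hw⟩ : ∃ w, ∀ z ∈ U, deriv f z = w := by
    rcases hda.is_constant_or_isOpen hconn.isPreconnected with h | h
    · exact h
    · exfalso
      obtain ⟨z₀, hz₀⟩ := hne
      have hopen : IsOpen (deriv f '' U) := h U le_rfl hU
      have hmem : deriv f z₀ ∈ deriv f '' U := ⟨z₀, hz₀, rfl⟩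
      obtain ⟨ε, hε, hball⟩ := Metric.isOpen_iff.1 hopen _ hmem
      have hmem2 : deriv f z₀ + (ε / 2) * Complex.I ∈ deriv f '' U := by
        apply hball
        simp only [Metric.mem_ball, dist_eq_norm, add_sub_cancel_left]
        rw [norm_mul]
        simp [abs_of_pos hε]
        linarith
      obtain ⟨z₁, hz₁, hz₁e⟩ := hmem2
      have h4 := him z₁ hz₁
      rw [hz₁e] at h4
      simp [Complex.add_im, him z₀ hz₀] at h4
      linarith
  obtain ⟨z₀, hz₀⟩ := hne
  have hwim : w.im = 0 := by rw [← hw z₀ hz₀]; exact him z₀ hz₀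
  refine ⟨w.re, ?_, ?_⟩
  · intro z hz
    rw [hw z hz]
    exact (Complex.ext (by simp) (by simp [hwim])).symm
  -- Step 3 : `f z - w * z` is constant on `U`
  · set F : ℂ → ℂ := fun z => f z - w * z with hF
    have hFa : AnalyticOnNhd ℂ F U :=
      hfa.sub ((analyticOnNhd_const.mul analyticOnNhd_id) : AnalyticOnNhd ℂ (fun z => w * z) U)
    have hFd : ∀ z ∈ U, deriv F z = 0 := by
      intro z hz
      have hd : DifferentiableAt ℂ f z := hf.differentiableAt (hU.mem_nhds hz)
      have : deriv F z = deriv f z - w := by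
        rw [hF]
        rw [deriv_fun_sub hd (by fun_prop)]
        congr 1
        simpa using deriv_const_mul_field (v := fun z : ℂ => z) (x := z) w
      rw [this, hw z hz, sub_self]
    -- F is locally constant near z₀, hence constant on U by the identity theorem
    obtain ⟨r, hr, hball⟩ := Metric.isOpen_iff.1 hU z₀ hz₀
    have hconst : ∀ x ∈ Metric.ball z₀ r, F x = F z₀ := by
      intro x hx
      have hFdiff : DifferentiableOn ℂ F (Metric.ball z₀ r) := by
        intro y hy
        exact ((hf.differentiableAt (hU.mem_nhds (hball hy))).sub
          (by fun_prop)).differentiableWithinAt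
      refine (convex_ball z₀ r).is_const_of_fderivWithin_eq_zero hFdiff ?_ hx
        (Metric.mem_ball_self hr)
      intro y hy
      rw [fderivWithin_of_isOpen Metric.isOpen_ball hy]
      exact fderiv_eq_zero_of_deriv_eq_zero (hFd y (hball hy))
    have hev : F =ᶠ[nhds z₀] fun _ => F z₀ :=
      Filter.eventuallyEq_of_mem (Metric.isOpen_ball.mem_nhds (Metric.mem_ball_self hr)) hconst
    have heq : Set.EqOn F (fun _ => F z₀) U :=
      hFa.eqOn_of_preconnected_of_eventuallyEq analyticOnNhd_const hconn.isPreconnected hz₀ hev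
    refine ⟨(F z₀).re, fun z hz => ?_⟩
    have : f z = w * z + F z₀ := by
      have := heq hz
      simp only [hF] at this ⊢
      linear_combination this
    rw [this]
    simp [Complex.add_re, Complex.mul_re, hwim]
end
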